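/- arXiv:0709.4393 — 5 statements merged into one kernel-verified Lean document; each statement's English description precedes it below -/
import Mathlib

section
/- Let F be the free group on the 2k generators a_1, b_1, …, a_k, b_k (k ≥ 1) and let R ∈ F. Then there exist elements a′, b′ ∈ F and a group homomorphism φ : F → ℤ such that: (i) a′ and b′ lie in, and generate, the subgroup of F generated by a_k and b_k; (ii) the family (a_1, b_1, …, a_{k−1}, b_{k−1}, a′, b′) is a free basis of F; (iii) [a′, b′] = [a_k, b_k]; (iv) φ(a′) = 1, φ(b′) = 0, and φ(a_i) = φ(b_i) = 0 for all 1 ≤ i ≤ k−1; and (v) φ(R) = 0 (i.e. as a reduced word in the new basis, R has exponent sum zero in a′). -/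
open scoped commutatorElement

namespace ESZB

open Subgroup

lemma closure_pair1 {G : Type*} [Group G] (A B : G) (t : ℤ) :
    closure {A * B ^ t, B} = closure {A, B} := by
  have hA : A ∈ closure {A * B ^ t, B} := by
    have h : A = (A * B ^ t) * B ^ (-t) := by group
    rw [h]
    exact mul_mem (subset_closure (by simp)) (zpow_mem (subset_closure (by simp)) _)
  apply le_antisymm
  · rw [closure_le]
    rintro x (rfl | rfl)
    · exact mul_mem (subset_closure (by simp)) (zpow_mem (subset_closure (by simp)) t)
    · exact subset_closure (by simp)
  · rw [closure_le]
    rintro x (rfl | rfl)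
    · exact hA
    · exact subset_closure (by simp)

lemma closure_pair2 {G : Type*} [Group G] (A B : G) (s : ℤ) :
    closure {A, B * A ^ s} = closure {A, B} := by
  have hB : B ∈ closure {A, B * A ^ s} := by
    have h : B = (B * A ^ s) * A ^ (-s) := by group
    rw [h]
    exact mul_mem (subset_closure (by simp)) (zpow_mem (subset_closure (by simp)) _)
  apply le_antisymm
  · rw [closure_le]
    rintro x (rfl | rfl)
    · exact subset_closure (by simp)
    · exact mul_mem (subset_closure (by simp)) (zpow_mem (subset_closure (by simp)) s)
  · rw [closure_le]
    rintro x (rfl | rfl)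
    · exact subset_closure (by simp)
    · exact hB

lemma comm1 {G : Type*} [Group G] (A B : G) (t : ℤ) : ⁅A * B ^ t, B⁆ = ⁅A, B⁆ := by
  simp only [commutatorElement_def]
  group

lemma comm2 {G : Type*} [Group G] (A B : G) (s : ℤ) : ⁅A, B * A ^ s⁆ = ⁅A, B⁆ := by
  simp only [commutatorElement_def]
  group

/-! ### The free group side -/

abbrev F (k : ℕ) := FreeGroup (Fin k × Bool)

abbrev lf (k : ℕ) (A B : F k) : Fin k × Bool → F k :=
  fun p => if (p.1 : ℕ) < k - 1 then FreeGroup.of p else if p.2 = false then A else B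

lemma kpos (k : ℕ) (hk : 1 ≤ k) : k - 1 < k := by omega

def ga (k : ℕ) (hk : 1 ≤ k) : F k := FreeGroup.of ((⟨k - 1, kpos k hk⟩ : Fin k), false)
def gb (k : ℕ) (hk : 1 ≤ k) : F k := FreeGroup.of ((⟨k - 1, kpos k hk⟩ : Fin k), true)

variable {k : ℕ}

lemma lift_lf_ga (hk : 1 ≤ k) (A B : F k) : FreeGroup.lift (lf k A B) (ga k hk) = A := by
  simp [ga, lf]

lemma lift_lf_gb (hk : 1 ≤ k) (A B : F k) : FreeGroup.lift (lf k A B) (gb k hk) = B := by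
  simp [gb, lf]

lemma lf_comp (A B C D : F k) :
    (FreeGroup.lift (lf k A B)).comp (FreeGroup.lift (lf k C D)) =
      FreeGroup.lift (lf k ((FreeGroup.lift (lf k A B)) C) ((FreeGroup.lift (lf k A B)) D)) := by
  apply FreeGroup.ext_hom
  intro p
  simp only [MonoidHom.comp_apply, FreeGroup.lift_apply_of]
  by_cases hp : (p.1 : ℕ) < k - 1
  · simp [lf, hp]
  · by_cases hb : p.2 = false <;> simp [lf, hp, hb]

lemma lf_base (hk : 1 ≤ k) :
    FreeGroup.lift (lf k (ga k hk) (gb k hk)) = MonoidHom.id (F k) := by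
  apply FreeGroup.ext_hom
  intro p
  simp only [FreeGroup.lift_apply_of, MonoidHom.id_apply]
  by_cases hp : (p.1 : ℕ) < k - 1
  · simp [lf, hp]
  · have h1 : (p.1 : ℕ) = k - 1 := by omega
    by_cases hb : p.2 = false
    · have hpp : p = ((⟨k - 1, by omega⟩ : Fin k), false) := by
        obtain ⟨p1, p2⟩ := p
        exact Prod.ext (Fin.ext (by simpa using h1)) (by simpa using hb)
      simp [lf, hp, hb, hpp, ga]
    · have hpp : p = ((⟨k - 1, by omega⟩ : Fin k), true) := by
        obtain ⟨p1, p2⟩ := p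
        exact Prod.ext (Fin.ext (by simpa using h1)) (by simpa using hb)
      simp [lf, hp, hb, hpp, gb]

/-- a Nielsen pair: all three conditions of the statement that only involve `a', b'`. -/
def Good (hk : 1 ≤ k) (A B : F k) : Prop :=
  closure {A, B} = closure {ga k hk, gb k hk} ∧
  Function.Bijective ⇑(FreeGroup.lift (lf k A B)) ∧
  ⁅A, B⁆ = ⁅ga k hk, gb k hk⁆

lemma bij_of_mutual_inverse {A B C D : F k}
    (h1 : (FreeGroup.lift (lf k A B)).comp (FreeGroup.lift (lf k C D)) = MonoidHom.id (F k))
    (h2 : (FreeGroup.lift (lf k C D)).comp (FreeGroup.lift (lf k A B)) = MonoidHom.id (F k)) :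
    Function.Bijective ⇑(FreeGroup.lift (lf k A B)) := by
  constructor
  · apply Function.LeftInverse.injective (g := ⇑(FreeGroup.lift (lf k C D)))
    intro x
    exact DFunLike.congr_fun h2 x
  · apply Function.RightInverse.surjective (g := ⇑(FreeGroup.lift (lf k C D)))
    intro x
    exact DFunLike.congr_fun h1 x

lemma nmove1_bij (hk : 1 ≤ k) (t : ℤ) :
    Function.Bijective ⇑(FreeGroup.lift (lf k (ga k hk * gb k hk ^ t) (gb k hk))) := by
  apply bij_of_mutual_inverse (C := ga k hk * gb k hk ^ (-t)) (D := gb k hk)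
  · rw [lf_comp, map_mul, map_zpow, lift_lf_ga, lift_lf_gb]
    rw [show ga k hk * gb k hk ^ t * gb k hk ^ (-t) = ga k hk by group]
    exact lf_base hk
  · rw [lf_comp, map_mul, map_zpow, lift_lf_ga, lift_lf_gb]
    rw [show ga k hk * gb k hk ^ (-t) * gb k hk ^ t = ga k hk by group]
    exact lf_base hk

lemma nmove2_bij (hk : 1 ≤ k) (s : ℤ) :
    Function.Bijective ⇑(FreeGroup.lift (lf k (ga k hk) (gb k hk * ga k hk ^ s))) := by
  apply bij_of_mutual_inverse (C := ga k hk) (D := gb k hk * ga k hk ^ (-s))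
  · rw [lf_comp, map_mul, map_zpow, lift_lf_ga, lift_lf_gb]
    rw [show gb k hk * ga k hk ^ s * ga k hk ^ (-s) = gb k hk by group]
    exact lf_base hk
  · rw [lf_comp, map_mul, map_zpow, lift_lf_ga, lift_lf_gb]
    rw [show gb k hk * ga k hk ^ (-s) * ga k hk ^ s = gb k hk by group]
    exact lf_base hk

lemma good_base (hk : 1 ≤ k) : Good hk (ga k hk) (gb k hk) := by
  refine ⟨rfl, ?_, rfl⟩
  rw [lf_base hk]
  exact Function.bijective_id

lemma good_move1 (hk : 1 ≤ k) {A B : F k} (t : ℤ) (h : Good hk A B) :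
    Good hk (A * B ^ t) B := by
  obtain ⟨hc, hb, hcomm⟩ := h
  refine ⟨(closure_pair1 A B t).trans hc, ?_, (comm1 A B t).trans hcomm⟩
  have e1 : FreeGroup.lift (lf k (A * B ^ t) B) =
      (FreeGroup.lift (lf k A B)).comp
        (FreeGroup.lift (lf k (ga k hk * gb k hk ^ t) (gb k hk))) := by
    rw [lf_comp, map_mul, map_zpow, lift_lf_ga, lift_lf_gb]
  rw [e1, MonoidHom.coe_comp]
  exact hb.comp (nmove1_bij hk t)

lemma good_move2 (hk : 1 ≤ k) {A B : F k} (s : ℤ) (h : Good hk A B) :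
    Good hk A (B * A ^ s) := by
  obtain ⟨hc, hb, hcomm⟩ := h
  refine ⟨(closure_pair2 A B s).trans hc, ?_, (comm2 A B s).trans hcomm⟩
  have e1 : FreeGroup.lift (lf k A (B * A ^ s)) =
      (FreeGroup.lift (lf k A B)).comp
        (FreeGroup.lift (lf k (ga k hk) (gb k hk * ga k hk ^ s))) := by
    rw [lf_comp, map_mul, map_zpow, lift_lf_ga, lift_lf_gb]
  rw [e1, MonoidHom.coe_comp]
  exact hb.comp (nmove2_bij hk s)

/-! ### Exponent sums -/

def ea (hk : 1 ≤ k) : F k →* Multiplicative ℤ :=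
  FreeGroup.lift (fun p => if p = ((⟨k - 1, kpos k hk⟩ : Fin k), false)
    then Multiplicative.ofAdd (1 : ℤ) else 1)

def eb (hk : 1 ≤ k) : F k →* Multiplicative ℤ :=
  FreeGroup.lift (fun p => if p = ((⟨k - 1, kpos k hk⟩ : Fin k), true)
    then Multiplicative.ofAdd (1 : ℤ) else 1)

lemma ea_ga (hk : 1 ≤ k) : Multiplicative.toAdd (ea hk (ga k hk)) = 1 := by simp [ea, ga]
lemma eb_ga (hk : 1 ≤ k) : Multiplicative.toAdd (eb hk (ga k hk)) = 0 := by simp [eb, ga]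
lemma ea_gb (hk : 1 ≤ k) : Multiplicative.toAdd (ea hk (gb k hk)) = 0 := by simp [ea, gb]
lemma eb_gb (hk : 1 ≤ k) : Multiplicative.toAdd (eb hk (gb k hk)) = 1 := by simp [eb, gb]

/-! ### Moves, matrices, and the invariant -/

def gstep (s : F k × F k) (e : Bool × ℤ) : F k × F k :=
  if e.1 then (s.1, s.2 * s.1 ^ e.2) else (s.1 * s.2 ^ e.2, s.2)

def mstep (m : ℤ × ℤ × ℤ × ℤ) (e : Bool × ℤ) : ℤ × ℤ × ℤ × ℤ :=
  if e.1 then (m.1, m.2.1, m.2.2.1 + e.2 * m.1, m.2.2.2 + e.2 * m.2.1)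
  else (m.1 + e.2 * m.2.2.1, m.2.1 + e.2 * m.2.2.2, m.2.2.1, m.2.2.2)

def mmul (p q : ℤ × ℤ × ℤ × ℤ) : ℤ × ℤ × ℤ × ℤ :=
  (p.1 * q.1 + p.2.1 * q.2.2.1, p.1 * q.2.1 + p.2.1 * q.2.2.2,
   p.2.2.1 * q.1 + p.2.2.2 * q.2.2.1, p.2.2.1 * q.2.1 + p.2.2.2 * q.2.2.2)

lemma mmul_assoc (p q r : ℤ × ℤ × ℤ × ℤ) : mmul (mmul p q) r = mmul p (mmul q r) := by
  simp only [mmul, Prod.mk.injEq]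
  refine ⟨by ring, by ring, by ring, by ring⟩

lemma mmul_one (p : ℤ × ℤ × ℤ × ℤ) : mmul p (1, 0, 0, 1) = p := by
  obtain ⟨a, b, c, d⟩ := p
  simp only [mmul, Prod.mk.injEq]
  refine ⟨by ring, by ring, by ring, by ring⟩

lemma mmul_one' (p : ℤ × ℤ × ℤ × ℤ) : mmul (1, 0, 0, 1) p = p := by
  obtain ⟨a, b, c, d⟩ := p
  simp only [mmul, Prod.mk.injEq]
  refine ⟨by ring, by ring, by ring, by ring⟩

lemma mstep_eq_mmul (m : ℤ × ℤ × ℤ × ℤ) (e : Bool × ℤ) :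
    mstep m e = mmul (mstep (1, 0, 0, 1) e) m := by
  obtain ⟨b, t⟩ := e
  obtain ⟨a1, a2, a3, a4⟩ := m
  cases b <;>
    · simp only [mstep, mmul, if_true, if_false, Bool.false_eq_true, ite_false, ite_true]
      refine Prod.ext (by ring) (Prod.ext (by ring) (Prod.ext (by ring) (by ring)))

lemma foldl_mstep_linear (L : List (Bool × ℤ)) (m : ℤ × ℤ × ℤ × ℤ) :
    List.foldl mstep m L = mmul (List.foldl mstep (1, 0, 0, 1) L) m := by
  induction L generalizing m with
  | nil => simp [mmul_one']
  | cons e L ih =>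
    rw [List.foldl_cons, List.foldl_cons, ih (mstep m e), ih (mstep (1, 0, 0, 1) e),
      mstep_eq_mmul m e, ← mmul_assoc]

def Inv (hk : 1 ≤ k) (s : F k × F k) (q : ℤ × ℤ × ℤ × ℤ) : Prop :=
  Good hk s.1 s.2 ∧
  Multiplicative.toAdd (ea hk s.1) = q.1 ∧
  Multiplicative.toAdd (eb hk s.1) = q.2.1 ∧
  Multiplicative.toAdd (ea hk s.2) = q.2.2.1 ∧
  Multiplicative.toAdd (eb hk s.2) = q.2.2.2 ∧
  q.1 * q.2.2.2 - q.2.1 * q.2.2.1 = 1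

lemma inv_base (hk : 1 ≤ k) : Inv hk (ga k hk, gb k hk) (1, 0, 0, 1) := by
  exact ⟨good_base hk, ea_ga hk, eb_ga hk, ea_gb hk, eb_gb hk, by ring⟩

lemma inv_step (hk : 1 ≤ k) {s : F k × F k} {q : ℤ × ℤ × ℤ × ℤ} (e : Bool × ℤ)
    (h : Inv hk s q) : Inv hk (gstep s e) (mstep q e) := by
  obtain ⟨hg, h1, h2, h3, h4, hdet⟩ := h
  obtain ⟨b, t⟩ := e
  cases b
  · simp only [gstep, mstep, if_false, Bool.false_eq_true, ite_false]
    refine ⟨good_move1 hk t hg, ?_, ?_, h3, h4, by linear_combination hdet⟩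
    · simp [map_mul, map_zpow, toAdd_mul, toAdd_zpow, h1, h3, smul_eq_mul]
    · simp [map_mul, map_zpow, toAdd_mul, toAdd_zpow, h2, h4, smul_eq_mul]
  · simp only [gstep, mstep, if_true, ite_true]
    refine ⟨good_move2 hk t hg, h1, h2, ?_, ?_, by linear_combination hdet⟩
    · simp [map_mul, map_zpow, toAdd_mul, toAdd_zpow, h1, h3, smul_eq_mul]
    · simp [map_mul, map_zpow, toAdd_mul, toAdd_zpow, h2, h4, smul_eq_mul]

lemma inv_foldl (hk : 1 ≤ k) (L : List (Bool × ℤ)) {s : F k × F k} {q : ℤ × ℤ × ℤ × ℤ}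
    (h : Inv hk s q) : Inv hk (List.foldl gstep s L) (List.foldl mstep q L) := by
  induction L generalizing s q with
  | nil => exact h
  | cons e L ih => exact ih (inv_step hk e h)

/-! ### Euclid -/

lemma natAbs_emod_lt (a b : ℤ) (hb : b ≠ 0) : (a % b).natAbs < b.natAbs := by
  have h1 : 0 ≤ a % b := Int.emod_nonneg a hb
  have h2 : a % b < |b| := Int.emod_lt_abs a hb
  rw [Int.abs_eq_natAbs] at h2
  omega

lemma bottom_cons (e : Bool × ℤ) (L : List (Bool × ℤ)) :
    List.foldl mstep (1, 0, 0, 1) (e :: L) =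
      mmul (List.foldl mstep (1, 0, 0, 1) L) (mstep (1, 0, 0, 1) e) := by
  rw [List.foldl_cons, foldl_mstep_linear]

lemma trans_false (L : List (Bool × ℤ)) (t n m : ℤ)
    (h : n * (List.foldl mstep (1, 0, 0, 1) L).2.2.2
        = m * (List.foldl mstep (1, 0, 0, 1) L).2.2.1) :
    n * (List.foldl mstep (1, 0, 0, 1) ((false, t) :: L)).2.2.2
      = (m + t * n) * (List.foldl mstep (1, 0, 0, 1) ((false, t) :: L)).2.2.1 := by
  rw [bottom_cons]
  simp only [mstep, mmul, if_false, Bool.false_eq_true, ite_false]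
  linear_combination h

lemma trans_true (L : List (Bool × ℤ)) (s n m : ℤ)
    (h : n * (List.foldl mstep (1, 0, 0, 1) L).2.2.2
        = m * (List.foldl mstep (1, 0, 0, 1) L).2.2.1) :
    (n + s * m) * (List.foldl mstep (1, 0, 0, 1) ((true, s) :: L)).2.2.2
      = m * (List.foldl mstep (1, 0, 0, 1) ((true, s) :: L)).2.2.1 := by
  rw [bottom_cons]
  simp only [mstep, mmul, if_true, ite_true]
  linear_combination h

lemma euclid : ∀ (c : ℕ) (n m : ℤ), n.natAbs = c →
    ∃ L : List (Bool × ℤ),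
      n * (List.foldl mstep (1, 0, 0, 1) L).2.2.2
        = m * (List.foldl mstep (1, 0, 0, 1) L).2.2.1 := by
  intro c
  induction c using Nat.strong_induction_on with
  | _ c ih =>
    intro n m hc
    by_cases hn : n = 0
    · exact ⟨[], by simp [hn]⟩
    · have hmn : n * (m / n) + m % n = m := Int.mul_ediv_add_emod m n
      by_cases hr : m % n = 0
      · refine ⟨[(false, m / n - 1), (true, 1)], ?_⟩
        simp only [List.foldl, mstep, if_true, if_false, Bool.false_eq_true, ite_false, ite_true]
        ring_nf
        nlinarith [hmn, hr]
      · have hlt1 : (m % n).natAbs < c := hc ▸ natAbs_emod_lt m n hn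
        have hlt2 : (n % (m % n)).natAbs < (m % n).natAbs := natAbs_emod_lt n (m % n) hr
        obtain ⟨L'', hL''⟩ := ih (n % (m % n)).natAbs (by omega) (n % (m % n)) (m % n) rfl
        have h1 := trans_true L'' (n / (m % n)) _ _ hL''
        have hn' : n % (m % n) + n / (m % n) * (m % n) = n := by
          have := Int.mul_ediv_add_emod n (m % n)
          linarith
        rw [hn'] at h1
        have h2 := trans_false ((true, n / (m % n)) :: L'') (m / n) _ _ h1
        have hm' : m % n + m / n * n = m := by linarith
        rw [hm'] at h2
        exact ⟨(false, m / n) :: (true, n / (m % n)) :: L'', h2⟩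

end ESZB

/-- Change of basis in the last handle. Let `F` be the free group on the `2k`
generators `a_1, b_1, …, a_k, b_k` (modelled on `Fin k × Bool`, with `(i, false) = a_{i+1}`
and `(i, true) = b_{i+1}`), and `R ∈ F`. Then there are `a', b' ∈ F` and a homomorphism
`φ : F → ℤ` (written multiplicatively as `F →* Multiplicative ℤ`) such that:
(i) `a'` and `b'` lie in and generate the subgroup generated by `a_k` and `b_k`;
(ii) `a_1, b_1, …, a_{k-1}, b_{k-1}, a', b'` is a free basis of `F` (the induced
lift is bijective); (iii) `[a', b'] = [a_k, b_k]`; (iv) `φ(a') = 1`, `φ(b') = 0`,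
`φ(a_i) = φ(b_i) = 0` for `i < k`; and (v) `φ(R) = 0`, i.e. `R` has exponent sum
zero in `a'` as a word in the new basis. -/
theorem exponent_sum_zero_basis (k : ℕ) (hk : 1 ≤ k) (R : FreeGroup (Fin k × Bool)) :
    ∃ (a' b' : FreeGroup (Fin k × Bool)) (φ : FreeGroup (Fin k × Bool) →* Multiplicative ℤ),
      Subgroup.closure {a', b'} =
        Subgroup.closure {FreeGroup.of ((⟨k - 1, by omega⟩ : Fin k), false),
          FreeGroup.of ((⟨k - 1, by omega⟩ : Fin k), true)} ∧
      Function.Bijective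
        ⇑(FreeGroup.lift (fun p : Fin k × Bool =>
          if (p.1 : ℕ) < k - 1 then FreeGroup.of p
          else if p.2 = false then a' else b')) ∧
      ⁅a', b'⁆ = ⁅FreeGroup.of ((⟨k - 1, by omega⟩ : Fin k), false),
        FreeGroup.of ((⟨k - 1, by omega⟩ : Fin k), true)⁆ ∧
      φ a' = Multiplicative.ofAdd 1 ∧
      φ b' = 1 ∧
      (∀ p : Fin k × Bool, (p.1 : ℕ) < k - 1 → φ (FreeGroup.of p) = 1) ∧
      φ R = 1 := by
  classical
  open ESZB in
  obtain ⟨L, hL⟩ := ESZB.euclid (Multiplicative.toAdd (ESZB.ea hk R)).natAbs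
    (Multiplicative.toAdd (ESZB.ea hk R)) (Multiplicative.toAdd (ESZB.eb hk R)) rfl
  set n : ℤ := Multiplicative.toAdd (ESZB.ea hk R) with hn
  set m : ℤ := Multiplicative.toAdd (ESZB.eb hk R) with hm
  have hInv := ESZB.inv_foldl hk L (ESZB.inv_base hk)
  set S := List.foldl ESZB.gstep (ESZB.ga k hk, ESZB.gb k hk) L with hS
  set Q := List.foldl ESZB.mstep (1, 0, 0, 1) L with hQ
  obtain ⟨hgood, h1, h2, h3, h4, hdet⟩ := hInv
  set x : ℤ := Q.2.2.2 with hx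
  set y : ℤ := -Q.2.2.1 with hy
  set φ : FreeGroup (Fin k × Bool) →* Multiplicative ℤ :=
    FreeGroup.lift (fun p => if (p.1 : ℕ) < k - 1 then 1
      else if p.2 = false then Multiplicative.ofAdd x else Multiplicative.ofAdd y) with hφ
  have hχ : ∀ W : FreeGroup (Fin k × Bool),
      φ W = Multiplicative.ofAdd
        (x * Multiplicative.toAdd (ESZB.ea hk W) + y * Multiplicative.toAdd (ESZB.eb hk W)) := by
    have heq : φ = MonoidHom.mk'
        (fun W => Multiplicative.ofAdd
          (x * Multiplicative.toAdd (ESZB.ea hk W) + y * Multiplicative.toAdd (ESZB.eb hk W)))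
        (by
          intro u v
          simp only [map_mul, toAdd_mul]
          rw [← ofAdd_add]
          ring_nf) := by
      apply FreeGroup.ext_hom
      intro p
      simp only [hφ, FreeGroup.lift_apply_of, MonoidHom.mk'_apply]
      by_cases hp : (p.1 : ℕ) < k - 1
      · have hpa : p ≠ ((⟨k - 1, by omega⟩ : Fin k), false) := by
          intro h; rw [h] at hp; simp at hp
        have hpb : p ≠ ((⟨k - 1, by omega⟩ : Fin k), true) := by
          intro h; rw [h] at hp; simp at hp
        simp [ESZB.ea, ESZB.eb, hp, hpa, hpb]
      · have h1 : (p.1 : ℕ) = k - 1 := by omega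
        by_cases hb : p.2 = false
        · have hpp : p = ((⟨k - 1, by omega⟩ : Fin k), false) := by
            obtain ⟨p1, p2⟩ := p
            exact Prod.ext (Fin.ext (by simpa using h1)) (by simpa using hb)
          have hne : ((⟨k - 1, by omega⟩ : Fin k), false) ≠ ((⟨k - 1, by omega⟩ : Fin k), true) := by
            simp
          simp [ESZB.ea, ESZB.eb, hp, hb, hpp, hne]
        · have hpp : p = ((⟨k - 1, by omega⟩ : Fin k), true) := by
            obtain ⟨p1, p2⟩ := p
            exact Prod.ext (Fin.ext (by simpa using h1)) (by simpa using hb)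
          have hne : ((⟨k - 1, by omega⟩ : Fin k), true) ≠ ((⟨k - 1, by omega⟩ : Fin k), false) := by
            simp
          simp [ESZB.ea, ESZB.eb, hp, hb, hpp, hne]
    intro W
    rw [heq]
    rfl
  refine ⟨S.1, S.2, φ, ?_, ?_, ?_, ?_, ?_, ?_, ?_⟩
  · exact hgood.1
  · exact hgood.2.1
  · exact hgood.2.2
  · rw [hχ S.1, h1, h2]
    congr 1
    rw [hx, hy]
    linear_combination hdet
  · rw [hχ S.2, h3, h4]
    rw [show x * Q.2.2.1 + y * Q.2.2.2 = 0 by rw [hx, hy]; ring]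
    rfl
  · intro p hp
    simp [hφ, FreeGroup.lift_apply_of, hp]
  · rw [hχ R, ← hn, ← hm]
    rw [show x * n + y * m = 0 by rw [hx, hy]; linear_combination hL]
    rfl
end

section
/- Let k ≥ 2 and 1 ≤ j ≤ k−1. Then the homomorphism from the free group on the 2j letters a_1, b_1, …, a_j, b_j to the genus-k surface group Σ_k, sending each of these letters to the image in Σ_k of the corresponding generator, is injective; that is, the subgroup P_j of Σ_k is freely generated by the images of a_1, b_1, …, a_j, b_j. -/
open scoped commutatorElement

/-- The surface relator `[a_1,b_1][a_2,b_2]⋯[a_k,b_k]` in the free group on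
`Fin k × Bool`, where `(i, false)` represents `a_{i+1}` and `(i, true)` represents
`b_{i+1}`. -/
def surfRel (k : ℕ) : FreeGroup (Fin k × Bool) :=
  (List.ofFn (fun i : Fin k => ⁅FreeGroup.of (i, false), FreeGroup.of (i, true)⁆)).prod

/-- The genus-`k` surface group `Σ_k`. -/
abbrev SurfaceGroup (k : ℕ) : Type :=
  FreeGroup (Fin k × Bool) ⧸ Subgroup.normalClosure {surfRel k}

/-- The image in `Σ_k` of the free generator indexed by `p`. -/
def sgen (k : ℕ) (p : Fin k × Bool) : SurfaceGroup k :=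
  QuotientGroup.mk' (Subgroup.normalClosure {surfRel k}) (FreeGroup.of p)

/-- `P_j`: the subgroup of `Σ_k` generated by the images of `a_1, b_1, …, a_j, b_j`. -/
def P (k j : ℕ) : Subgroup (SurfaceGroup k) :=
  Subgroup.closure (sgen k '' {p : Fin k × Bool | (p.1 : ℕ) < j})

/-- `Q_j`: the subgroup of `Σ_k` generated by the images of `a_{j+1}, b_{j+1}, …, a_k, b_k`. -/
def Q (k j : ℕ) : Subgroup (SurfaceGroup k) :=
  Subgroup.closure (sgen k '' {p : Fin k × Bool | j ≤ (p.1 : ℕ)})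

@[ext] structure Heis where
  a : ℤ
  b : ℤ
  c : ℤ

namespace Heis

instance : Mul Heis := ⟨fun u v => ⟨u.a + v.a, u.b + v.b, u.c + v.c + u.a * v.b⟩⟩
instance : One Heis := ⟨⟨0, 0, 0⟩⟩
instance : Inv Heis := ⟨fun u => ⟨-u.a, -u.b, -u.c + u.a * u.b⟩⟩

@[simp] lemma mul_a (u v : Heis) : (u * v).a = u.a + v.a := rfl
@[simp] lemma mul_b (u v : Heis) : (u * v).b = u.b + v.b := rfl
@[simp] lemma mul_c (u v : Heis) : (u * v).c = u.c + v.c + u.a * v.b := rfl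
@[simp] lemma one_a : (1 : Heis).a = 0 := rfl
@[simp] lemma one_b : (1 : Heis).b = 0 := rfl
@[simp] lemma one_c : (1 : Heis).c = 0 := rfl
@[simp] lemma inv_a (u : Heis) : u⁻¹.a = -u.a := rfl
@[simp] lemma inv_b (u : Heis) : u⁻¹.b = -u.b := rfl
@[simp] lemma inv_c (u : Heis) : u⁻¹.c = -u.c + u.a * u.b := rfl

instance : Group Heis where
  mul_assoc u v w := by ext <;> simp <;> ring
  one_mul u := by ext <;> simp
  mul_one u := by ext <;> simp
  inv_mul_cancel u := by ext <;> simp <;> ring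

/-- The central element. -/
def z : Heis := ⟨0, 0, 1⟩

lemma z_zpow (n : ℤ) : z ^ n = ⟨0, 0, n⟩ := by
  induction n using Int.induction_on with
  | zero => rw [zpow_zero]; rfl
  | succ n ih => rw [zpow_add_one, ih]; ext <;> simp [z]
  | pred n ih => rw [zpow_sub_one, ih]; ext <;> simp [z] <;> ring

lemma z_zpow_eq_one_iff (n : ℤ) : z ^ n = 1 ↔ n = 0 := by
  rw [z_zpow]
  constructor
  · intro h; exact congrArg Heis.c h
  · rintro rfl; rfl

end Heis

/-- If `g` maps to a nonzero power of the central element of the Heisenberg group,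
then the powers of `g` give an injective map. -/
lemma injective_zpowersHom' {G : Type*} [Group G] (g : G) (F : G →* Heis) (c : ℤ)
    (hc : c ≠ 0) (hF : F g = Heis.z ^ c) :
    Function.Injective (zpowersHom G g) := by
  rw [injective_iff_map_eq_one]
  intro m hm
  have : F (g ^ m.toAdd) = 1 := by rw [← zpowersHom_apply, hm, map_one]
  rw [map_zpow, hF, ← zpow_mul, Heis.z_zpow_eq_one_iff] at this
  have : m.toAdd = 0 := by
    rcases mul_eq_zero.1 this with h | h
    · exact absurd h hc
    · exact h
  simpa using congrArg Multiplicative.ofAdd this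

/-- The map to the Heisenberg group sending `a_1 ↦ x`, `b_1 ↦ y` and all other
generators to `1`. -/
def toHeis (m : ℕ) : FreeGroup (Fin m × Bool) →* Heis :=
  FreeGroup.lift fun p =>
    if (p.1 : ℕ) = 0 then (if p.2 then (⟨0, 1, 0⟩ : Heis) else ⟨1, 0, 0⟩) else 1

lemma hom_ofFn_prod {M N : Type*} [Monoid M] [Monoid N] (f : M →* N) {n : ℕ}
    (g : Fin n → M) : f (List.ofFn g).prod = (List.ofFn fun i => f (g i)).prod := by
  rw [map_list_prod, List.map_ofFn]
  rfl

lemma toHeis_surfRel (m : ℕ) (hm : 1 ≤ m) : toHeis m (surfRel m) = Heis.z := by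
  obtain ⟨m, rfl⟩ : ∃ m', m = m' + 1 := ⟨m - 1, by omega⟩
  rw [surfRel, hom_ofFn_prod, List.ofFn_succ, List.prod_cons]
  have h1 : (List.ofFn fun i : Fin m =>
      toHeis (m + 1) ⁅FreeGroup.of ((Fin.succ i), false), FreeGroup.of ((Fin.succ i), true)⁆).prod
      = 1 := by
    apply List.prod_eq_one
    intro x hx
    rw [List.mem_ofFn] at hx
    obtain ⟨i, rfl⟩ := hx
    rw [map_commutatorElement]
    have h0 : ((Fin.succ i : Fin (m+1)) : ℕ) ≠ 0 := by simp [Fin.val_succ]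
    simp [toHeis, FreeGroup.lift_apply_of, h0, commutatorElement_def]
  rw [h1, mul_one, map_commutatorElement]
  have : toHeis (m + 1) (FreeGroup.of ((0 : Fin (m+1)), false)) = ⟨1, 0, 0⟩ := by
    simp [toHeis]
  have h2 : toHeis (m + 1) (FreeGroup.of ((0 : Fin (m+1)), true)) = ⟨0, 1, 0⟩ := by
    simp [toHeis]
  rw [this, h2, commutatorElement_def]
  ext <;> simp [Heis.z]

open Monoid

section Pushout

variable (j m : ℕ)

/-- The two-element family of free groups. -/
def Gfam : Bool → Type := fun b => FreeGroup (Fin (cond b m j) × Bool)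

instance (b : Bool) : Group (Gfam j m b) := inferInstanceAs (Group (FreeGroup _))

/-- The base maps of the pushout diagram. -/
def phi : ∀ b : Bool, Multiplicative ℤ →* Gfam j m b
  | false => zpowersHom _ (surfRel j)
  | true => zpowersHom _ ((surfRel m)⁻¹)

lemma phi_injective (hj : 1 ≤ j) (hm : 1 ≤ m) (b : Bool) :
    Function.Injective (phi j m b) := by
  cases b
  · exact injective_zpowersHom' _ (toHeis j) 1 one_ne_zero
      (by rw [zpow_one]; exact toHeis_surfRel j hj)
  · exact injective_zpowersHom' _ (toHeis m) (-1) (by norm_num)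
      (by simp only [map_inv, zpow_neg, zpow_one]; exact (map_inv (toHeis m) (surfRel m)).trans (congrArg Inv.inv (toHeis_surfRel m hm)))

end Pushout

section Main

open Monoid

/-- The canonical map from the ambient free group to the pushout, sending the
first `j` generator pairs to the first factor and the rest to the second factor. -/
def g0 (k j m : ℕ) (hjm : j + m = k) :
    FreeGroup (Fin k × Bool) →* Monoid.PushoutI (phi j m) :=
  FreeGroup.lift fun p =>
    if hp : (p.1 : ℕ) < j then
      Monoid.PushoutI.of (φ := phi j m) false (FreeGroup.of ((⟨p.1, hp⟩ : Fin j), p.2))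
    else
      Monoid.PushoutI.of (φ := phi j m) true
        (FreeGroup.of ((⟨(p.1 : ℕ) - j, by omega⟩ : Fin m), p.2))

lemma g0_of_lt (k j m : ℕ) (hjm : j + m = k) (p : Fin k × Bool) (hp : (p.1 : ℕ) < j) :
    g0 k j m hjm (FreeGroup.of p) =
      Monoid.PushoutI.of (φ := phi j m) false (FreeGroup.of ((⟨p.1, hp⟩ : Fin j), p.2)) := by
  rw [g0, FreeGroup.lift_apply_of, dif_pos hp]

lemma g0_of_ge (k j m : ℕ) (hjm : j + m = k) (p : Fin k × Bool) (hp : ¬ (p.1 : ℕ) < j) :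
    g0 k j m hjm (FreeGroup.of p) =
      Monoid.PushoutI.of (φ := phi j m) true
        (FreeGroup.of ((⟨(p.1 : ℕ) - j, by omega⟩ : Fin m), p.2)) := by
  rw [g0, FreeGroup.lift_apply_of, dif_neg hp]

lemma g0_surfRel (k j m : ℕ) (hjm : j + m = k) :
    g0 k j m hjm (surfRel k) = 1 := by
  subst hjm
  rw [surfRel, List.ofFn_add, List.prod_append, map_mul, hom_ofFn_prod, hom_ofFn_prod]
  have hL : (List.ofFn fun i : Fin j => g0 (j + m) j m rfl
        ⁅FreeGroup.of ((Fin.castLE (Nat.le_add_right j m) i), false), FreeGroup.of ((Fin.castLE (Nat.le_add_right j m) i), true)⁆).prod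
      = Monoid.PushoutI.of (φ := phi j m) false (surfRel j) := by
    rw [surfRel]; erw [hom_ofFn_prod]
    congr 1
    refine congrArg List.ofFn (funext fun i => ?_)
    rw [map_commutatorElement]; erw [map_commutatorElement]; rw [
      g0_of_lt _ _ _ _ _ (by simpa using i.isLt), g0_of_lt _ _ _ _ _ (by simpa using i.isLt)]
    congr 2 <;> exact congrArg _ (congrArg (·, _) (Fin.ext (by simp)))
  have hR : (List.ofFn fun i : Fin m => g0 (j + m) j m rfl
        ⁅FreeGroup.of ((Fin.natAdd j i), false), FreeGroup.of ((Fin.natAdd j i), true)⁆).prod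
      = Monoid.PushoutI.of (φ := phi j m) true (surfRel m) := by
    rw [surfRel]; erw [hom_ofFn_prod]
    congr 1
    refine congrArg List.ofFn (funext fun i => ?_)
    rw [map_commutatorElement]; erw [map_commutatorElement]; rw [
      g0_of_ge _ _ _ _ _ (by simp), g0_of_ge _ _ _ _ _ (by simp)]
    congr 2 <;> exact congrArg _ (congrArg (·, _) (Fin.ext (by simp)))
  rw [hL, hR]
  have h1 : Monoid.PushoutI.of (φ := phi j m) false (surfRel j)
      = Monoid.PushoutI.base (phi j m) (Multiplicative.ofAdd 1) := by
    rw [← Monoid.PushoutI.of_apply_eq_base (phi j m) false]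
    congr 1
    show surfRel j = phi j m false (Multiplicative.ofAdd 1)
    simp [phi, zpowersHom_apply]
    exact (zpow_one (surfRel j)).symm
  have h2 : Monoid.PushoutI.of (φ := phi j m) true (surfRel m)
      = (Monoid.PushoutI.base (phi j m) (Multiplicative.ofAdd 1))⁻¹ := by
    rw [← Monoid.PushoutI.of_apply_eq_base (phi j m) true, ← map_inv]
    congr 1
    show surfRel m = (phi j m true (Multiplicative.ofAdd 1))⁻¹
    simp [phi, zpowersHom_apply]
    exact (inv_inv _).symm
  rw [h1, h2, mul_inv_cancel]

end Main


/-- For `k ≥ 2` and `1 ≤ j ≤ k-1`, the subgroup `P_j` of the genus-`k` surface group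
`Σ_k` is freely generated by the images of `a_1, b_1, …, a_j, b_j`: the natural map
from the free group on these `2j` letters to `Σ_k` is injective. -/
theorem surface_subgroup_free (k j : ℕ) (hk : 2 ≤ k) (hj : 1 ≤ j) (hjk : j ≤ k - 1) :
    Function.Injective
      ⇑(FreeGroup.lift (fun p : Fin j × Bool =>
        sgen k (Fin.castLE (by omega) p.1, p.2))) := by
  set m := k - j with hm
  have hjm : j + m = k := by omega
  have hm1 : 1 ≤ m := by omega
  have hker : Subgroup.normalClosure {surfRel k} ≤ (g0 k j m hjm).ker :=
    Subgroup.normalClosure_le_normal (by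
      simp only [Set.singleton_subset_iff, SetLike.mem_coe, MonoidHom.mem_ker]
      exact g0_surfRel k j m hjm)
  set L := FreeGroup.lift (fun p : Fin j × Bool =>
    sgen k (Fin.castLE (by omega : j ≤ k) p.1, p.2)) with hL
  let f : SurfaceGroup k →* Monoid.PushoutI (phi j m) :=
    QuotientGroup.lift _ (g0 k j m hjm) hker
  have hcomp : f.comp L = Monoid.PushoutI.of (φ := phi j m) false := by
    apply FreeGroup.ext_hom
    intro p
    rw [MonoidHom.comp_apply, hL, FreeGroup.lift_apply_of]
    have hf : f (sgen k (Fin.castLE (by omega : j ≤ k) p.1, p.2))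
        = g0 k j m hjm (FreeGroup.of (Fin.castLE (by omega : j ≤ k) p.1, p.2)) := rfl
    rw [hf, g0_of_lt k j m hjm _ (by simpa using p.1.isLt)]
    congr 1
  have hinj : Function.Injective ⇑(f.comp L) := by
    rw [hcomp]
    exact Monoid.PushoutI.of_injective (phi_injective j m hj hm1) false
  rw [MonoidHom.coe_comp] at hinj
  exact Function.Injective.of_comp hinj
end

section
/- The homomorphism from the free group on the three letters a₁, b₁, b₂ to the group G₃, sending each of these letters to the image in G₃ of the corresponding generator, is injective; that is, the subgroup M of G₃ generated by the images of a₁, b₁, b₂ is freely generated by them. -/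
/-! The group `G₃`: quotient of the free group on `a₁, b₁, a₂, b₂` (modelled on
`Fin 4` with `0 = a₁`, `1 = b₁`, `2 = a₂`, `3 = b₂`) by the normal closure of
`[a₁,b₁][a₂,b₂]` and `b₁⁴a₂⁻¹b₁³a₂b₁²a₂⁻¹b₁³a₂`. -/

open scoped commutatorElement

/-- The surface relator `[a₁,b₁][a₂,b₂]`. -/
def rel1 : FreeGroup (Fin 4) :=
  ⁅FreeGroup.of (0 : Fin 4), FreeGroup.of (1 : Fin 4)⁆ * ⁅FreeGroup.of (2 : Fin 4), FreeGroup.of (3 : Fin 4)⁆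

/-- The relator `b₁⁴a₂⁻¹b₁³a₂b₁²a₂⁻¹b₁³a₂`. -/
def rel2 : FreeGroup (Fin 4) :=
  FreeGroup.of (1 : Fin 4) ^ 4 * (FreeGroup.of (2 : Fin 4))⁻¹ * FreeGroup.of (1 : Fin 4) ^ 3 * FreeGroup.of (2 : Fin 4) *
    FreeGroup.of (1 : Fin 4) ^ 2 * (FreeGroup.of (2 : Fin 4))⁻¹ * FreeGroup.of (1 : Fin 4) ^ 3 * FreeGroup.of (2 : Fin 4)

/-- The group `G₃`. -/
abbrev G3 : Type :=
  FreeGroup (Fin 4) ⧸ Subgroup.normalClosure {rel1, rel2}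

/-- The image in `G₃` of the `i`-th generator. -/
def g3 (i : Fin 4) : G3 :=
  QuotientGroup.mk' (Subgroup.normalClosure {rel1, rel2}) (FreeGroup.of i)

set_option linter.dupNamespace false
set_option linter.unnecessarySimpa false
namespace G3Proof
open Monoid Pointwise
def kleinRel : Set (FreeGroup Bool) :=
  {FreeGroup.of false * FreeGroup.of true * (FreeGroup.of false)⁻¹ * FreeGroup.of true}

abbrev KB : Type := PresentedGroup kleinRel

def kc : KB := PresentedGroup.of false
def kd : KB := PresentedGroup.of true
def kv : KB := kd * (kc ^ 3)⁻¹

lemma klein_relation : kc * kd * kc⁻¹ * kd = 1 := by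
  have h : PresentedGroup.mk kleinRel
      (FreeGroup.of false * FreeGroup.of true * (FreeGroup.of false)⁻¹ * FreeGroup.of true) = 1 := by
    have hmem : (FreeGroup.of false * FreeGroup.of true * (FreeGroup.of false)⁻¹ * FreeGroup.of true)
        ∈ Subgroup.normalClosure kleinRel :=
      Subgroup.subset_normalClosure (by simp [kleinRel])
    exact (QuotientGroup.eq_one_iff _).mpr hmem
  simpa [kc, kd, PresentedGroup.of, map_mul, map_inv] using h

lemma klein_lift_check {T : Type*} [Group T] (x y : T) (hxy : x * y * x⁻¹ * y = 1) :
    ∀ r ∈ kleinRel, FreeGroup.lift (fun b => if b then y else x) r = 1 := by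
  intro r hr
  simp only [kleinRel, Set.mem_singleton_iff] at hr
  subst hr
  simpa using hxy

/-- Homomorphism out of the Klein bottle group. -/
def kbHom {T : Type*} [Group T] (x y : T) (hxy : x * y * x⁻¹ * y = 1) : KB →* T :=
  PresentedGroup.toGroup (klein_lift_check x y hxy)

@[simp] lemma kbHom_c {T : Type*} [Group T] (x y : T) (hxy : x * y * x⁻¹ * y = 1) :
    kbHom x y hxy kc = x := by
  simpa [kbHom, kc] using PresentedGroup.toGroup.of (klein_lift_check x y hxy) (x := false)

@[simp] lemma kbHom_d {T : Type*} [Group T] (x y : T) (hxy : x * y * x⁻¹ * y = 1) :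
    kbHom x y hxy kd = y := by
  simpa [kbHom, kd] using PresentedGroup.toGroup.of (klein_lift_check x y hxy) (x := true)

/-- the key identity in the Klein bottle group -/
lemma kb_key : kc ^ 4 * kv * kc ^ 2 * kv = 1 := by
  have h := klein_relation
  have : kc ^ 4 * kv * kc ^ 2 * kv = kc ^ 3 * (kc * kd * kc⁻¹ * kd) * (kc ^ 3)⁻¹ := by
    unfold kv; group
  rw [this, h]; group

/-! ### infinite order elements -/

lemma zpow_eq_one_imp {G : Type*} [Group G] (φ : G →* Multiplicative ℤ) (x : G) (k : ℤ)
    (hk : Multiplicative.toAdd (φ x) = k) (hk0 : k ≠ 0) :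
    ∀ n : ℤ, x ^ n = 1 → n = 0 := by
  intro n h
  have h2 : Multiplicative.toAdd (φ (x ^ n)) = n * k := by
    rw [map_zpow, toAdd_zpow, hk, smul_eq_mul]
  rw [h, map_one] at h2
  have : n * k = 0 := by simpa using h2.symm
  exact (mul_eq_zero.mp this).resolve_right hk0

def χ : KB →* Multiplicative ℤ :=
  kbHom (Multiplicative.ofAdd (1 : ℤ)) 1 (by group)

lemma ord_kc : ∀ n : ℤ, kc ^ n = 1 → n = 0 :=
  zpow_eq_one_imp χ kc 1 (by simp [χ]) one_ne_zero

lemma ord_kc3 : ∀ n : ℤ, (kc ^ 3) ^ n = 1 → n = 0 :=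
  zpow_eq_one_imp χ (kc ^ 3) 3 (by simp [χ]) (by norm_num)

lemma ord_kv : ∀ n : ℤ, kv ^ n = 1 → n = 0 :=
  zpow_eq_one_imp χ kv (-3) (by simp [χ, kv]) (by norm_num)

lemma ord_f2gen : ∀ n : ℤ, (FreeGroup.of (1 : Fin 2) : FreeGroup (Fin 2)) ^ n = 1 → n = 0 :=
  zpow_eq_one_imp (FreeGroup.lift fun _ => Multiplicative.ofAdd (1 : ℤ)) _ 1 (by simp) one_ne_zero

theorem pair_free {N : Bool → Type} [∀ b, Group (N b)] (g : ∀ b, N b)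
    (hg : ∀ b, ∀ n : ℤ, g b ^ n = 1 → n = 0) :
    Function.Injective ⇑(FreeGroup.lift (fun b : Bool => (CoprodI.of (g b) : CoprodI N))) := by
  classical
  have hg1 : ∀ b, g b ≠ 1 := fun b h =>
    one_ne_zero (hg b 1 (by simpa using h))
  set L := CoprodI N with hL
  let f : ∀ b : Bool, Multiplicative ℤ →* L := fun b => zpowersHom L (CoprodI.of (g b))
  have hcard : (3 : Cardinal) ≤ Cardinal.mk (Multiplicative ℤ) := by
    rw [Cardinal.mk_congr Multiplicative.toAdd, Cardinal.mk_int]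
    simpa using (Cardinal.nat_lt_aleph0 3).le
  let X : Bool → Set (CoprodI.Word N) := fun b => {w | w.fstIdx = some b}
  have hXne : ∀ b, (X b).Nonempty := by
    intro b
    refine ⟨CoprodI.Word.cons (g b) CoprodI.Word.empty ?_ (hg1 b), ?_⟩
    · simp [CoprodI.Word.fstIdx, CoprodI.Word.empty]
    · rfl
  have hXdisj : Pairwise (Function.onFun Disjoint X) := by
    intro i j hij
    rw [Function.onFun, Set.disjoint_left]
    rintro w h1 h2
    exact hij (Option.some_injective _ ((Set.mem_setOf.mp h1).symm.trans (Set.mem_setOf.mp h2)))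
  have hpp : Pairwise fun i j => ∀ h : Multiplicative ℤ, h ≠ 1 → f i h • X j ⊆ X i := by
    intro i j hij h hh
    rintro x ⟨w, hw, rfl⟩
    have hn : Multiplicative.toAdd h ≠ 0 := by
      intro e; exact hh (by simpa using congrArg Multiplicative.ofAdd e)
    set n := Multiplicative.toAdd h with hn'
    have hfm : f i h = CoprodI.of (g i ^ n) := by
      simp only [f, zpowersHom_apply, ← hn']
      rw [map_zpow]
    have hmne : g i ^ n ≠ 1 := fun e => hn (hg i n e)
    have hne : w.fstIdx ≠ some i := by
      rw [Set.mem_setOf.mp hw]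
      intro e; exact hij (Option.some_injective _ e).symm
    show (f i h • w).fstIdx = some i
    rw [hfm, CoprodI.Word.of_smul_def, CoprodI.Word.equivPair_eq_of_fstIdx_ne hne]
    simp [CoprodI.Word.rcons, hmne, CoprodI.Word.fstIdx_cons]
  have key : Function.Injective ⇑(CoprodI.lift f) :=
    CoprodI.lift_injective_of_ping_pong f (Or.inr ⟨false, hcard⟩) X hXne hXdisj hpp
  let jf : FreeGroup Bool →* CoprodI (fun _ : Bool => Multiplicative ℤ) :=
    FreeGroup.lift (fun b => CoprodI.of (i := b) (Multiplicative.ofAdd (1 : ℤ)))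
  let rf : CoprodI (fun _ : Bool => Multiplicative ℤ) →* FreeGroup Bool :=
    CoprodI.lift (fun b => zpowersHom _ (FreeGroup.of b))
  have hrj : Function.LeftInverse rf jf := by
    have hcomp : rf.comp jf = MonoidHom.id _ := by
      apply FreeGroup.ext_hom
      intro b
      simp [jf, rf, zpowersHom_apply]
    intro x
    rw [← MonoidHom.comp_apply, hcomp, MonoidHom.id_apply]
  have hfinal : (CoprodI.lift f).comp jf =
      FreeGroup.lift (fun b : Bool => (CoprodI.of (g b) : L)) := by
    apply FreeGroup.ext_hom
    intro b
    simp [jf, f, zpowersHom_apply]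
  rw [← hfinal, MonoidHom.coe_comp]
  exact key.comp hrj.injective

/-! ### The base group `H = F₂ * K` -/

def Fac : Bool → Type
  | false => FreeGroup (Fin 2)
  | true => KB

instance facGroup : ∀ b, Group (Fac b)
  | false => inferInstanceAs (Group (FreeGroup (Fin 2)))
  | true => inferInstanceAs (Group KB)

abbrev HH : Type := CoprodI Fac

def αe : HH := CoprodI.of (i := false) (FreeGroup.of 0)
def βe : HH := CoprodI.of (i := false) (FreeGroup.of 1)
def cH : HH := CoprodI.of (i := true) kc
def vH : HH := CoprodI.of (i := true) kv
def uH : HH := cH * αe * cH⁻¹ * αe⁻¹ * βe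

def gA : (b : Bool) → Fac b
  | false => FreeGroup.of 1
  | true => kv

def gB : (b : Bool) → Fac b
  | false => FreeGroup.of 1
  | true => kc ^ 3

def fA : FreeGroup Bool →* HH := FreeGroup.lift fun b => CoprodI.of (gA b)
def fB0 : FreeGroup Bool →* HH := FreeGroup.lift fun b => CoprodI.of (gB b)
def fB : FreeGroup Bool →* HH := FreeGroup.lift fun b => if b then cH ^ 3 else uH

lemma fA_false : fA (FreeGroup.of false) = βe := by simp [fA]; rfl
lemma fA_true : fA (FreeGroup.of true) = vH := by simp [fA]; rfl
lemma fB0_false : fB0 (FreeGroup.of false) = βe := by simp [fB0]; rfl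
lemma fB0_true : fB0 (FreeGroup.of true) = cH ^ 3 := by
  have h : fB0 (FreeGroup.of true) = CoprodI.of (gB true) := by simp [fB0]
  rw [h]
  show CoprodI.of (i := true) (kc ^ 3) = cH ^ 3
  erw [map_pow, cH]
lemma fB_false : fB (FreeGroup.of false) = uH := by simp [fB]
lemma fB_true : fB (FreeGroup.of true) = cH ^ 3 := by simp [fB]

lemma hfA : Function.Injective ⇑fA := by
  apply pair_free gA
  intro b
  cases b
  · exact ord_f2gen
  · exact ord_kv

lemma hfB0 : Function.Injective ⇑fB0 := by
  apply pair_free gB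
  intro b
  cases b
  · exact ord_f2gen
  · exact ord_kc3

def ψcomp : (b : Bool) → (Fac b →* HH)
  | false => FreeGroup.lift (fun i : Fin 2 => if i = 0 then 1 else βe)
  | true => CoprodI.of

def ψ : HH →* HH := CoprodI.lift ψcomp

lemma ψ_cH : ψ cH = cH := by
  show CoprodI.lift ψcomp (CoprodI.of (i := true) kc) = cH
  erw [CoprodI.lift_of]
  rfl

lemma ψ_αe : ψ αe = 1 := by
  show CoprodI.lift ψcomp (CoprodI.of (i := false) (FreeGroup.of 0)) = 1
  erw [CoprodI.lift_of]
  show (FreeGroup.lift fun i : Fin 2 => if i = 0 then (1 : HH) else βe) (FreeGroup.of 0) = 1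
  simp

lemma ψ_βe : ψ βe = βe := by
  show CoprodI.lift ψcomp (CoprodI.of (i := false) (FreeGroup.of 1)) = βe
  erw [CoprodI.lift_of]
  show (FreeGroup.lift fun i : Fin 2 => if i = 0 then (1 : HH) else βe) (FreeGroup.of 1) = βe
  simp

lemma hψ : ψ.comp fB = fB0 := by
  apply FreeGroup.ext_hom
  intro b
  cases b
  · show ψ (fB (FreeGroup.of false)) = fB0 (FreeGroup.of false)
    rw [fB_false, fB0_false]
    simp only [uH, map_mul, map_inv, ψ_cH, ψ_αe, ψ_βe, inv_one, mul_one, one_mul]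
    group
  · show ψ (fB (FreeGroup.of true)) = fB0 (FreeGroup.of true)
    rw [fB_true, fB0_true, map_pow, ψ_cH]

lemma hfB : Function.Injective ⇑fB := by
  apply Function.Injective.of_comp (f := ⇑ψ)
  rw [← MonoidHom.coe_comp, hψ]
  exact hfB0

/-! ### the three-generator subgroup of `H` -/

def j3 : FreeGroup (Fin 3) →* HH :=
  FreeGroup.lift fun i => if i = 0 then αe else if i = 1 then cH else βe

def ρcomp : (b : Bool) → (Fac b →* FreeGroup (Fin 3))
  | false => FreeGroup.lift (fun i : Fin 2 => if i = 0 then FreeGroup.of 0 else FreeGroup.of 2)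
  | true => kbHom (FreeGroup.of 1) 1 (by group)

def ρ3 : HH →* FreeGroup (Fin 3) := CoprodI.lift ρcomp

lemma ρ3_αe : ρ3 αe = FreeGroup.of 0 := by
  show CoprodI.lift ρcomp (CoprodI.of (i := false) (FreeGroup.of 0)) = FreeGroup.of 0
  erw [CoprodI.lift_of]
  show (FreeGroup.lift fun i : Fin 2 => if i = 0 then FreeGroup.of 0 else FreeGroup.of 2)
    (FreeGroup.of 0) = FreeGroup.of (0 : Fin 3)
  simp

lemma ρ3_βe : ρ3 βe = FreeGroup.of 2 := by
  show CoprodI.lift ρcomp (CoprodI.of (i := false) (FreeGroup.of 1)) = FreeGroup.of 2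
  erw [CoprodI.lift_of]
  show (FreeGroup.lift fun i : Fin 2 => if i = 0 then FreeGroup.of 0 else FreeGroup.of 2)
    (FreeGroup.of 1) = FreeGroup.of (2 : Fin 3)
  simp

lemma ρ3_cH : ρ3 cH = FreeGroup.of 1 := by
  show CoprodI.lift ρcomp (CoprodI.of (i := true) kc) = FreeGroup.of 1
  erw [CoprodI.lift_of]
  show kbHom (FreeGroup.of 1) 1 (by group) kc = FreeGroup.of (1 : Fin 3)
  rw [kbHom_c]

lemma hj3 : Function.Injective ⇑j3 := by
  apply Function.Injective.of_comp (f := ⇑ρ3)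
  have hcomp : ρ3.comp j3 = MonoidHom.id _ := by
    apply FreeGroup.ext_hom
    intro i
    show ρ3 (j3 (FreeGroup.of i)) = FreeGroup.of i
    fin_cases i
    · show ρ3 (j3 (FreeGroup.of 0)) = FreeGroup.of 0
      have : j3 (FreeGroup.of 0) = αe := by simp [j3]
      rw [this, ρ3_αe]
    · show ρ3 (j3 (FreeGroup.of 1)) = FreeGroup.of 1
      have : j3 (FreeGroup.of 1) = cH := by simp [j3]
      rw [this, ρ3_cH]
    · show ρ3 (j3 (FreeGroup.of 2)) = FreeGroup.of 2
      have : j3 (FreeGroup.of 2) = βe := by simp [j3]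
      rw [this, ρ3_βe]
  rw [← MonoidHom.coe_comp, hcomp]
  exact fun x y h => h

/-! ### the HNN extension -/

noncomputable def φAB : fA.range ≃* fB.range :=
  (MonoidHom.ofInjective hfA).symm.trans (MonoidHom.ofInjective hfB)

lemma φAB_apply (x : FreeGroup Bool) (hx : fA x ∈ fA.range) :
    (φAB ⟨fA x, hx⟩ : HH) = fB x := by
  have h1 : (MonoidHom.ofInjective hfA).symm ⟨fA x, hx⟩ = x := by
    rw [MulEquiv.symm_apply_eq]
    exact Subtype.ext (MonoidHom.ofInjective_apply hfA).symm
  show ((MonoidHom.ofInjective hfB) ((MonoidHom.ofInjective hfA).symm ⟨fA x, hx⟩) : HH) = fB x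
  rw [h1]
  exact MonoidHom.ofInjective_apply hfB

noncomputable abbrev EE : Type := HNNExtension HH fA.range fB.range φAB

lemma hβmem : βe ∈ fA.range := ⟨FreeGroup.of false, fA_false⟩
lemma hvmem : vH ∈ fA.range := ⟨FreeGroup.of true, fA_true⟩
lemma hc3mem : cH ^ 3 ∈ fB.range := ⟨FreeGroup.of true, fB_true⟩

lemma t_conj_β :
    (HNNExtension.t : EE) * HNNExtension.of βe * (HNNExtension.t : EE)⁻¹ = HNNExtension.of uH := by
  have h := HNNExtension.equiv_eq_conj (φ := φAB) ⟨βe, hβmem⟩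
  rw [← h]
  congr 1
  have h2 : (⟨βe, hβmem⟩ : fA.range) = ⟨fA (FreeGroup.of false), MonoidHom.mem_range.mpr ⟨_, rfl⟩⟩ :=
    Subtype.ext fA_false.symm
  rw [h2, φAB_apply, fB_false]

lemma tinv_conj_c3 :
    (HNNExtension.t : EE)⁻¹ * (HNNExtension.of cH) ^ 3 * (HNNExtension.t : EE) =
      HNNExtension.of vH := by
  have hs : φAB.symm ⟨cH ^ 3, hc3mem⟩ = ⟨vH, hvmem⟩ := by
    rw [MulEquiv.symm_apply_eq]
    apply Subtype.ext
    have h2 : (⟨vH, hvmem⟩ : fA.range) = ⟨fA (FreeGroup.of true), MonoidHom.mem_range.mpr ⟨_, rfl⟩⟩ :=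
      Subtype.ext fA_true.symm
    rw [h2, φAB_apply, fB_true]
  have h := HNNExtension.equiv_symm_eq_conj (φ := φAB) ⟨cH ^ 3, hc3mem⟩
  rw [hs] at h
  have hp : ((HNNExtension.of cH : EE)) ^ 3 = HNNExtension.of (cH ^ 3) := (map_pow _ _ _).symm
  rw [hp, ← h]

noncomputable def θ4 : FreeGroup (Fin 4) →* EE :=
  FreeGroup.lift fun i => if i = 0 then HNNExtension.of αe else if i = 1 then HNNExtension.of cH
    else if i = 2 then HNNExtension.t else HNNExtension.of βe

lemma θ4_0 : θ4 (FreeGroup.of 0) = HNNExtension.of αe := by simp [θ4]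
lemma θ4_1 : θ4 (FreeGroup.of 1) = HNNExtension.of cH := by simp [θ4]
lemma θ4_2 : θ4 (FreeGroup.of 2) = HNNExtension.t := by simp [θ4]
lemma θ4_3 : θ4 (FreeGroup.of 3) = HNNExtension.of βe := by simp [θ4]

lemma θ4_rel1 : θ4 rel1 = 1 := by
  have h1 : θ4 rel1 = HNNExtension.of αe * HNNExtension.of cH * (HNNExtension.of αe)⁻¹ *
      (HNNExtension.of cH)⁻¹ *
      ((HNNExtension.t : EE) * HNNExtension.of βe * (HNNExtension.t : EE)⁻¹) *
      (HNNExtension.of βe)⁻¹ := by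
    simp only [rel1, commutatorElement_def, map_mul, map_inv, θ4_0, θ4_1, θ4_2, θ4_3]
    group
  rw [h1, t_conj_β]
  have h2 : (HNNExtension.of uH : EE) = HNNExtension.of cH * HNNExtension.of αe *
      (HNNExtension.of cH)⁻¹ * (HNNExtension.of αe)⁻¹ * HNNExtension.of βe := by
    simp [uH, map_mul, map_inv]
  rw [h2]
  group

lemma θ4_rel2 : θ4 rel2 = 1 := by
  have h1 : θ4 rel2 = (HNNExtension.of cH) ^ 4 *
      ((HNNExtension.t : EE)⁻¹ * (HNNExtension.of cH) ^ 3 * (HNNExtension.t : EE)) *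
      (HNNExtension.of cH) ^ 2 *
      ((HNNExtension.t : EE)⁻¹ * (HNNExtension.of cH) ^ 3 * (HNNExtension.t : EE)) := by
    simp only [rel2, map_mul, map_inv, map_pow, θ4_1, θ4_2, θ4_3]
    group
  rw [h1, tinv_conj_c3]
  have hH : cH ^ 4 * vH * cH ^ 2 * vH = 1 := by
    let φc : KB →* HH := CoprodI.of (M := Fac) (i := true)
    rw [show cH = φc kc from rfl, show vH = φc kv from rfl, ← map_pow, ← map_pow, ← map_mul, ← map_mul, ← map_mul, kb_key, map_one]
  calc (HNNExtension.of cH) ^ 4 * HNNExtension.of vH * (HNNExtension.of cH) ^ 2 *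
        HNNExtension.of vH
      = HNNExtension.of (cH ^ 4 * vH * cH ^ 2 * vH) := by
        rw [← map_pow, ← map_pow, ← map_mul, ← map_mul, ← map_mul]
    _ = 1 := by rw [hH, map_one]

lemma hker : Subgroup.normalClosure {rel1, rel2} ≤ θ4.ker := by
  apply Subgroup.normalClosure_le_normal
  rintro r hr
  rcases hr with rfl | hr
  · exact θ4_rel1
  · rw [Set.mem_singleton_iff] at hr
    subst hr
    exact θ4_rel2

noncomputable def Θ : G3 →* EE :=
  QuotientGroup.lift (Subgroup.normalClosure {rel1, rel2}) θ4 hker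

lemma Θ_g3 (i : Fin 4) : Θ (g3 i) = θ4 (FreeGroup.of i) := by
  simp [Θ, g3]

end G3Proof

open G3Proof in
/-- The natural map from the free group on the three letters `a₁, b₁, b₂`
(modelled on `Fin 3`, with `0 ↦ a₁`, `1 ↦ b₁`, `2 ↦ b₂`) to `G₃` is injective;
that is, the subgroup of `G₃` generated by the images of `a₁, b₁, b₂` is freely
generated by them. -/
theorem g3_free_subgroup :
    Function.Injective
      ⇑(FreeGroup.lift (fun i : Fin 3 => g3 (if i = 0 then 0 else if i = 1 then 1 else 3))) := by
  apply Function.Injective.of_comp (f := ⇑Θ)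
  have hcomp : Θ.comp (FreeGroup.lift (fun i : Fin 3 => g3 (if i = 0 then 0 else if i = 1 then 1 else 3)))
      = (HNNExtension.of : HH →* EE).comp j3 := by
    apply FreeGroup.ext_hom
    intro i
    simp only [MonoidHom.comp_apply, FreeGroup.lift_apply_of]
    fin_cases i
    · show Θ (g3 (if 0 = 0 then 0 else if (0 : Fin 3) = 1 then 1 else 3)) =
        HNNExtension.of (j3 (FreeGroup.of 0))
      rw [if_pos rfl, Θ_g3, θ4_0]
      have : j3 (FreeGroup.of 0) = αe := by simp [j3]
      rw [this]
    · show Θ (g3 (if (1 : Fin 3) = 0 then 0 else if (1 : Fin 3) = 1 then 1 else 3)) =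
        HNNExtension.of (j3 (FreeGroup.of 1))
      rw [if_neg (by decide), if_pos rfl, Θ_g3, θ4_1]
      have : j3 (FreeGroup.of 1) = cH := by simp [j3]
      rw [this]
    · show Θ (g3 (if (2 : Fin 3) = 0 then 0 else if (2 : Fin 3) = 1 then 1 else 3)) =
        HNNExtension.of (j3 (FreeGroup.of 2))
      rw [if_neg (by decide), if_neg (by decide), Θ_g3, θ4_3]
      have : j3 (FreeGroup.of 2) = βe := by simp [j3]
      rw [this]
  rw [← MonoidHom.coe_comp, hcomp, MonoidHom.coe_comp]
  exact (HNNExtension.of_injective (φ := φAB)).comp hj3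
end

section
/- Let M be the subgroup of G₃ generated by the images of a₁, b₁, b₂, and let g be the image of a₂ in G₃. Then g ∉ M and the intersection M ∩ gMg⁻¹ is not a cyclic subgroup of G₃ (indeed it contains a nonabelian free subgroup); in particular, M is not cyclonormal in G₃. -/
/-! The group `G₃`: quotient of the free group on `a₁, b₁, a₂, b₂` (modelled on
`Fin 4` with `0 = a₁`, `1 = b₁`, `2 = a₂`, `3 = b₂`) by the normal closure of
`[a₁,b₁][a₂,b₂]` and `b₁⁴a₂⁻¹b₁³a₂b₁²a₂⁻¹b₁³a₂`. -/

open scoped commutatorElement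

open Pointwise

/-- Key consequence of the relation `b⁴ub²u = 1`: `u² = b⁻⁶`. -/
lemma key_sq {G : Type*} [Group G] (b u : G) (h : b^4*u*b^2*u = 1) :
    u * u = (b^6)⁻¹ := by
  have e1 : u*b^2*u = (b^4)⁻¹ := by
    have e : u*b^2*u = (b^4)⁻¹ * (b^4*u*b^2*u) := by group
    rw [e, h, mul_one]
  have c2 : b^2*u*b^4*u = 1 := by
    have e : b^2*u*b^4*u = (b^4*u)⁻¹ * (b^4*u*b^2*u) * (b^4*u) := by group
    rw [e, h]; group
  have e2 : u*b^4*u = (b^2)⁻¹ := by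
    have e : u*b^4*u = (b^2)⁻¹ * (b^2*u*b^4*u) := by group
    rw [e, c2, mul_one]
  have hC : u*b^2 = b^2*u := by
    have e : u*b^2 = (u*b^4*u) * (u*b^2*u)⁻¹ * u := by group
    rw [e, e1, e2]; group
  calc u*u = (b^2)⁻¹ * (b^2*u) * u := by group
    _ = (b^2)⁻¹ * (u*b^2) * u := by rw [hC]
    _ = (b^2)⁻¹ * (u*b^2*u) := by group
    _ = (b^2)⁻¹ * (b^4)⁻¹ := by rw [e1]
    _ = (b^6)⁻¹ := by group

def fφ : Fin 4 → Equiv.Perm (Fin 4) := ![1, finRotate 4, 1, Equiv.swap 0 1]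

def Fφ : FreeGroup (Fin 4) →* Equiv.Perm (Fin 4) := FreeGroup.lift fφ

def fψ : Fin 4 → Equiv.Perm (Fin 4) := ![1, 1, Equiv.swap 0 1, 1]

def Fψ : FreeGroup (Fin 4) →* Equiv.Perm (Fin 4) := FreeGroup.lift fψ

set_option maxRecDepth 100000 in
lemma Fφ_ker : Subgroup.normalClosure {rel1, rel2} ≤ Fφ.ker := by
  apply Subgroup.normalClosure_le_normal
  rintro x (rfl | rfl) <;>
    · simp only [SetLike.mem_coe, MonoidHom.mem_ker, Fφ, rel1, rel2, map_mul, map_inv, map_pow,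
        map_commutatorElement, FreeGroup.lift_apply_of, fφ]
      decide

lemma Fψ_ker : Subgroup.normalClosure {rel1, rel2} ≤ Fψ.ker := by
  apply Subgroup.normalClosure_le_normal
  rintro x (rfl | rfl) <;>
    · simp only [SetLike.mem_coe, MonoidHom.mem_ker, Fψ, rel1, rel2, map_mul, map_inv, map_pow,
        map_commutatorElement, FreeGroup.lift_apply_of, fψ]
      decide

def φ : G3 →* Equiv.Perm (Fin 4) := QuotientGroup.lift _ Fφ Fφ_ker

def ψ : G3 →* Equiv.Perm (Fin 4) := QuotientGroup.lift _ Fψ Fψ_ker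

lemma φ_g3 (i : Fin 4) : φ (g3 i) = fφ i := by
  simp [φ, g3, QuotientGroup.mk'_apply, QuotientGroup.lift_mk', Fφ]

lemma ψ_g3 (i : Fin 4) : ψ (g3 i) = fψ i := by
  simp [ψ, g3, QuotientGroup.mk'_apply, QuotientGroup.lift_mk', Fψ]


/-- Let `M` be the subgroup of `G₃` generated by the images of `a₁, b₁, b₂`,
and let `g` be the image of `a₂`. Then `g ∉ M` and `M ∩ g M g⁻¹` is not cyclic;
in particular `M` is not cyclonormal in `G₃`. -/
theorem g3_not_cyclonormal :
    g3 2 ∉ Subgroup.closure {g3 0, g3 1, g3 3} ∧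
    ¬ ∃ z, Subgroup.closure {g3 0, g3 1, g3 3}
        ⊓ MulAut.conj (g3 2) • Subgroup.closure {g3 0, g3 1, g3 3}
      = Subgroup.zpowers z := by
  set M := Subgroup.closure {g3 0, g3 1, g3 3} with hM
  have ha : g3 0 ∈ M := Subgroup.subset_closure (by simp)
  have hb : g3 1 ∈ M := Subgroup.subset_closure (by simp)
  have hβ : g3 3 ∈ M := Subgroup.subset_closure (by simp)
  -- relator images are trivial
  have hrel1 : (QuotientGroup.mk' (Subgroup.normalClosure {rel1, rel2})) rel1 = 1 := by
    rw [QuotientGroup.mk'_apply]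
    exact (QuotientGroup.eq_one_iff rel1).2
      (Subgroup.subset_normalClosure (Set.mem_insert _ _))
  have hrel2 : (QuotientGroup.mk' (Subgroup.normalClosure {rel1, rel2})) rel2 = 1 := by
    rw [QuotientGroup.mk'_apply]
    exact (QuotientGroup.eq_one_iff rel2).2
      (Subgroup.subset_normalClosure (Set.mem_insert_of_mem _ rfl))
  rw [rel1] at hrel1
  rw [rel2] at hrel2
  simp only [map_mul, map_inv, map_pow, map_commutatorElement] at hrel1 hrel2
  have h1 : ⁅g3 0, g3 1⁆ * ⁅g3 2, g3 3⁆ = 1 := hrel1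
  have h2 : g3 1 ^ 4 * (g3 2)⁻¹ * g3 1 ^ 3 * g3 2 * g3 1 ^ 2 * (g3 2)⁻¹ * g3 1 ^ 3 * g3 2 = 1 := hrel2
  -- the key identity : (g3 2)⁻¹ * (g3 1)^6 * (g3 2) = ((g3 1)^6)⁻¹
  have hkey : (g3 2)⁻¹ * (g3 1)^6 * (g3 2) = ((g3 1)^6)⁻¹ := by
    have h2' : (g3 1)^4 * ((g3 2)⁻¹ * (g3 1)^3 * g3 2) * (g3 1)^2 *
        ((g3 2)⁻¹ * (g3 1)^3 * g3 2) = 1 := by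
      calc (g3 1)^4 * ((g3 2)⁻¹ * (g3 1)^3 * g3 2) * (g3 1)^2 * ((g3 2)⁻¹ * (g3 1)^3 * g3 2)
          = g3 1 ^ 4 * (g3 2)⁻¹ * g3 1 ^ 3 * g3 2 * g3 1 ^ 2 * (g3 2)⁻¹ * g3 1 ^ 3 * g3 2 := by
            group
        _ = 1 := h2
    have := key_sq (g3 1) ((g3 2)⁻¹ * (g3 1)^3 * g3 2) h2'
    calc (g3 2)⁻¹ * (g3 1)^6 * (g3 2)
        = ((g3 2)⁻¹ * (g3 1)^3 * g3 2) * ((g3 2)⁻¹ * (g3 1)^3 * g3 2) := by group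
      _ = ((g3 1)^6)⁻¹ := this
  -- the identity from rel1
  have hY : g3 2 * g3 3 * (g3 2)⁻¹ = g3 1 * g3 0 * (g3 1)⁻¹ * (g3 0)⁻¹ * g3 3 := by
    calc g3 2 * g3 3 * (g3 2)⁻¹
        = ⁅g3 0, g3 1⁆⁻¹ * (⁅g3 0, g3 1⁆ * ⁅g3 2, g3 3⁆) * g3 3 := by
          simp only [commutatorElement_def]; group
      _ = ⁅g3 0, g3 1⁆⁻¹ * 1 * g3 3 := by rw [h1]
      _ = g3 1 * g3 0 * (g3 1)⁻¹ * (g3 0)⁻¹ * g3 3 := by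
          simp only [commutatorElement_def]; group
  constructor
  · -- g3 2 ∉ M
    intro hmem
    have hle : M ≤ ψ.ker := by
      rw [hM]
      apply (Subgroup.closure_le _).2
      rintro x (rfl | rfl | rfl) <;>
        simp [MonoidHom.mem_ker, ψ_g3, fψ]
    have : ψ (g3 2) = 1 := hle hmem
    rw [ψ_g3] at this
    revert this
    decide
  · rintro ⟨z, hz⟩
    -- X = (g3 1)^6 and Y = g3 2 * g3 3 * (g3 2)⁻¹ are in the intersection
    have hXmem : (g3 1)^6 ∈ M ⊓ MulAut.conj (g3 2) • M := by
      refine Subgroup.mem_inf.2 ⟨pow_mem hb 6, ?_⟩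
      rw [Subgroup.mem_pointwise_smul_iff_inv_smul_mem]
      have : (MulAut.conj (g3 2))⁻¹ • (g3 1)^6 = ((g3 1)^6)⁻¹ := by
        rw [← map_inv MulAut.conj (g3 2), MulAut.smul_def, MulAut.conj_apply, inv_inv]
        exact hkey
      rw [this]
      exact inv_mem (pow_mem hb 6)
    have hYmem : g3 2 * g3 3 * (g3 2)⁻¹ ∈ M ⊓ MulAut.conj (g3 2) • M := by
      refine Subgroup.mem_inf.2 ⟨?_, ?_⟩
      · rw [hY]
        exact mul_mem (mul_mem (mul_mem (mul_mem hb ha) (inv_mem hb)) (inv_mem ha)) hβ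
      · rw [Subgroup.mem_pointwise_smul_iff_inv_smul_mem]
        have : (MulAut.conj (g3 2))⁻¹ • (g3 2 * g3 3 * (g3 2)⁻¹) = g3 3 := by
          rw [← map_inv MulAut.conj (g3 2), MulAut.smul_def, MulAut.conj_apply]
          group
        rw [this]
        exact hβ
    rw [hz] at hXmem hYmem
    obtain ⟨m, hm⟩ := Subgroup.mem_zpowers_iff.1 hXmem
    obtain ⟨n, hn⟩ := Subgroup.mem_zpowers_iff.1 hYmem
    have hcomm : (g3 1)^6 * (g3 2 * g3 3 * (g3 2)⁻¹)
        = (g3 2 * g3 3 * (g3 2)⁻¹) * (g3 1)^6 := by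
      rw [← hm, ← hn, ← zpow_add, ← zpow_add, add_comm]
    have := congrArg φ hcomm
    simp only [map_mul, map_inv, map_pow, φ_g3] at this
    revert this
    simp only [fφ]
    decide
end

section
/- (Collins) In the one-relator group H obtained as the quotient of the free group on two generators x, y by the normal closure of the element x⁴y⁻³x²y⁻³, the images of the generators satisfy x⁶ = y⁶. -/
/-- **Collins**: in the one-relator group `H = ⟨x, y : x⁴y⁻³x²y⁻³⟩` (modelled on
`Fin 2` with `0 = x`, `1 = y`), the images of the generators satisfy `x⁶ = y⁶`. -/
theorem collins_x6_eq_y6 :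
    QuotientGroup.mk' (Subgroup.normalClosure
        {FreeGroup.of (0 : Fin 2) ^ 4 * FreeGroup.of (1 : Fin 2) ^ (-3 : ℤ) *
          FreeGroup.of (0 : Fin 2) ^ 2 * FreeGroup.of (1 : Fin 2) ^ (-3 : ℤ)})
        (FreeGroup.of (0 : Fin 2)) ^ 6 =
    QuotientGroup.mk' (Subgroup.normalClosure
        {FreeGroup.of (0 : Fin 2) ^ 4 * FreeGroup.of (1 : Fin 2) ^ (-3 : ℤ) *
          FreeGroup.of (0 : Fin 2) ^ 2 * FreeGroup.of (1 : Fin 2) ^ (-3 : ℤ)})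
        (FreeGroup.of (1 : Fin 2)) ^ 6 := by
  set N : Subgroup (FreeGroup (Fin 2)) := Subgroup.normalClosure
      {FreeGroup.of (0 : Fin 2) ^ 4 * FreeGroup.of (1 : Fin 2) ^ (-3 : ℤ) *
        FreeGroup.of (0 : Fin 2) ^ 2 * FreeGroup.of (1 : Fin 2) ^ (-3 : ℤ)} with hN
  set π := QuotientGroup.mk' N with hπ
  set a := π (FreeGroup.of (0 : Fin 2)) with ha
  set b := π (FreeGroup.of (1 : Fin 2)) with hb
  -- the relator dies in the quotient
  have hr : FreeGroup.of (0 : Fin 2) ^ 4 * FreeGroup.of (1 : Fin 2) ^ (-3 : ℤ) *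
      FreeGroup.of (0 : Fin 2) ^ 2 * FreeGroup.of (1 : Fin 2) ^ (-3 : ℤ) ∈ N :=
    Subgroup.subset_normalClosure rfl
  have h : a ^ 4 * b ^ (-3 : ℤ) * a ^ 2 * b ^ (-3 : ℤ) = 1 := by
    have h1 : π (FreeGroup.of (0 : Fin 2) ^ 4 * FreeGroup.of (1 : Fin 2) ^ (-3 : ℤ) *
        FreeGroup.of (0 : Fin 2) ^ 2 * FreeGroup.of (1 : Fin 2) ^ (-3 : ℤ)) = 1 := by
      rw [hπ]
      exact (QuotientGroup.eq_one_iff _).2 hr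
    simpa [map_mul, map_pow, map_zpow, ha, hb] using h1
  set c := b ^ (-3 : ℤ) with hc
  -- two consequences of the relator
  have e1 : a ^ 2 * c = c⁻¹ * (a ^ 4)⁻¹ := by
    calc a ^ 2 * c = c⁻¹ * (a ^ 4)⁻¹ * (a ^ 4 * c * a ^ 2 * c) := by group
    _ = c⁻¹ * (a ^ 4)⁻¹ := by rw [h]; group
  have e2 : a ^ 4 * c = c⁻¹ * (a ^ 2)⁻¹ := by
    calc a ^ 4 * c = (a ^ 4 * c * a ^ 2 * c) * c⁻¹ * (a ^ 2)⁻¹ := by group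
    _ = c⁻¹ * (a ^ 2)⁻¹ := by rw [h]; group
  -- hence a² commutes with c
  have comm : a ^ 2 * c = c * a ^ 2 := by
    have k1 : a ^ 2 * c * (a ^ 2)⁻¹ = c⁻¹ * (a ^ 6)⁻¹ := by
      rw [show a ^ 2 * c * (a ^ 2)⁻¹ = (a ^ 2 * c) * (a ^ 2)⁻¹ by rfl, e1]; group
    have k2 : a ^ 4 * c * (a ^ 4)⁻¹ = c⁻¹ * (a ^ 6)⁻¹ := by
      rw [show a ^ 4 * c * (a ^ 4)⁻¹ = (a ^ 4 * c) * (a ^ 4)⁻¹ by rfl, e2]; group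
    have k3 : a ^ 2 * c * (a ^ 2)⁻¹ = a ^ 4 * c * (a ^ 4)⁻¹ := k1.trans k2.symm
    have k4 : c = a ^ 2 * c * (a ^ 2)⁻¹ := by
      calc c = (a ^ 2)⁻¹ * (a ^ 2 * c * (a ^ 2)⁻¹) * a ^ 2 := by group
      _ = (a ^ 2)⁻¹ * (a ^ 4 * c * (a ^ 4)⁻¹) * a ^ 2 := by rw [k3]
      _ = a ^ 2 * c * (a ^ 2)⁻¹ := by group
    calc a ^ 2 * c = (a ^ 2 * c * (a ^ 2)⁻¹) * a ^ 2 := by group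
    _ = c * a ^ 2 := by rw [← k4]
  -- conclude
  have h6 : a ^ 6 * (c * c) = 1 := by
    calc a ^ 6 * (c * c) = a ^ 4 * (a ^ 2 * c) * c := by group
    _ = a ^ 4 * (c * a ^ 2) * c := by rw [comm]
    _ = a ^ 4 * c * a ^ 2 * c := by group
    _ = 1 := h
  have : a ^ 6 = b ^ 6 := by
    have : a ^ 6 = (c * c)⁻¹ := by
      calc a ^ 6 = a ^ 6 * (c * c) * (c * c)⁻¹ := by group
      _ = (c * c)⁻¹ := by rw [h6]; group
    rw [this, hc]; group
  simpa [ha, hb, hπ, hN] using this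
end
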